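/- arXiv:1307.5409 — 5 statements merged into one kernel-verified Lean document; each statement's English description precedes it below -/
import Mathlib

section
/- Let φ : ℝⁿ → [0,∞) be a log-concave function, φ = e^{−ψ} with ψ : ℝⁿ → ℝ convex, C², strictly convex, with ∇ψ a diffeomorphism onto ℝⁿ, and let f : (0,∞) → ℝ be convex or concave with f*(t) = t f(1/t). Then ∫ φ° f( det(Hess(−ln φ°)) · e^{⟨∇φ°,x⟩/φ°} / (φ°)² ) dx = ∫ φ f*( det(Hess(−ln φ)) · e^{⟨∇φ,x⟩/φ} / φ² ) dx, i.e. D_f(P_{φ°}, Q_{φ°}) = D_{f*}(P_φ, Q_φ). -/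
open Real MeasureTheory
open InnerProductSpace

section AuxLemmas

variable {E : Type*} [NormedAddCommGroup E] [InnerProductSpace ℝ E] [CompleteSpace E]

/-- Subgradient inequality for a differentiable convex function. -/
lemma subgrad_ineq {ψ : E → ℝ} (hconv : ConvexOn ℝ Set.univ ψ)
    (hdiff : Differentiable ℝ ψ) (x y : E) :
    (inner ℝ (gradient ψ x) (y - x) : ℝ) ≤ ψ y - ψ x := by
  set v := y - x with hv
  have hcurve : HasDerivAt (fun t : ℝ => t • v + x) v 0 := by
    simpa using ((hasDerivAt_id (0:ℝ)).smul_const v).add_const x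
  have hF : HasFDerivAt ψ (toDual ℝ E (gradient ψ x)) x := (hdiff x).hasGradientAt.hasFDerivAt
  have hF0 : HasFDerivAt ψ (toDual ℝ E (gradient ψ x)) ((fun t : ℝ => t • v + x) 0) := by
    simpa using hF
  have hd : HasDerivAt (fun t : ℝ => ψ (t • v + x)) ((inner ℝ (gradient ψ x) v : ℝ)) 0 := by
    have := hF0.comp_hasDerivAt 0 hcurve
    simpa [toDual_apply_apply, Function.comp_def] using this
  have hg : ConvexOn ℝ Set.univ (fun t : ℝ => ψ (t • v + x)) := by
    have := hconv.comp_affineMap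
      ((AffineMap.lineMap x y : ℝ →ᵃ[ℝ] E))
    have heq : (ψ ∘ (AffineMap.lineMap x y : ℝ →ᵃ[ℝ] E)) = fun t : ℝ => ψ (t • v + x) := by
      funext t
      simp [AffineMap.lineMap_apply_module', hv]
    rw [heq] at this
    simpa using this
  have hslope := hg.le_slope_of_hasDerivAt (Set.mem_univ (0:ℝ)) (Set.mem_univ (1:ℝ))
    zero_lt_one hd
  rw [slope_def_field] at hslope
  simpa [hv] using hslope

/-- Monotonicity of the gradient of a convex function. -/
lemma grad_mono {ψ : E → ℝ} (hconv : ConvexOn ℝ Set.univ ψ)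
    (hdiff : Differentiable ℝ ψ) (x y : E) :
    0 ≤ (inner ℝ (gradient ψ y - gradient ψ x) (y - x) : ℝ) := by
  have h1 := subgrad_ineq hconv hdiff x y
  have h2 := subgrad_ineq hconv hdiff y x
  have h2' : (inner ℝ (gradient ψ y) (y - x) : ℝ) ≥ ψ y - ψ x := by
    have : (x - y) = -(y - x) := by abel
    rw [this, inner_neg_right] at h2
    linarith
  rw [inner_sub_left]
  linarith

/-- The Hessian of a differentiable convex function is positive semidefinite. -/
lemma hessian_psd {ψ : E → ℝ} (hconv : ConvexOn ℝ Set.univ ψ)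
    (hdiff : Differentiable ℝ ψ) {x : E}
    (hgd : DifferentiableAt ℝ (gradient ψ) x) (v : E) :
    0 ≤ (inner ℝ (fderiv ℝ (gradient ψ) x v) v : ℝ) := by
  set A := fderiv ℝ (gradient ψ) x with hA
  set F : ℝ → ℝ := fun t => (inner ℝ (gradient ψ (t • v + x) - gradient ψ x) v : ℝ) with hFdef
  have hcurve : HasDerivAt (fun t : ℝ => t • v + x) v 0 := by
    simpa using ((hasDerivAt_id (0:ℝ)).smul_const v).add_const x
  have hgd0 : HasFDerivAt (gradient ψ) A ((fun t : ℝ => t • v + x) 0) := by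
    simpa using hgd.hasFDerivAt
  have hcomp : HasDerivAt (fun t : ℝ => gradient ψ (t • v + x)) (A v) 0 :=
    by have := hgd0.comp_hasDerivAt 0 hcurve; exact this
  have hinner : HasDerivAt (fun t : ℝ => (inner ℝ (gradient ψ (t • v + x)) v : ℝ))
      ((inner ℝ (A v) v : ℝ)) 0 := by
    have h2 : HasFDerivAt (fun u : E => (inner ℝ u v : ℝ)) (innerSL ℝ v)
        ((fun t : ℝ => gradient ψ (t • v + x)) 0) := by
      have : (fun u : E => (inner ℝ u v : ℝ)) = fun u : E => (innerSL ℝ v) u := by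
        funext u; simp [real_inner_comm]
      rw [this]
      exact (innerSL ℝ v).hasFDerivAt
    have := h2.comp_hasDerivAt 0 hcomp
    rw [real_inner_comm v (A v)]
    simpa only [Function.comp_def, innerSL_apply_apply] using this
  have hF : HasDerivAt F ((inner ℝ (A v) v : ℝ)) 0 := by
    have := hinner.sub_const ((inner ℝ (gradient ψ x) v : ℝ))
    simpa [hFdef, inner_sub_left] using this
  have hslope : Filter.Tendsto (slope F 0) (nhdsWithin 0 {(0:ℝ)}ᶜ) (nhds ((inner ℝ (A v) v : ℝ))) :=
    hasDerivAt_iff_tendsto_slope.mp hF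
  have hF0 : F 0 = 0 := by simp [hFdef]
  refine ge_of_tendsto hslope ?_
  filter_upwards [self_mem_nhdsWithin] with t ht
  have ht0 : t ≠ 0 := ht
  have hmul : 0 ≤ F t * t := by
    have := grad_mono hconv hdiff x (t • v + x)
    have heq : (t • v + x) - x = t • v := by abel
    rw [heq, inner_smul_right] at this
    simpa [hFdef, mul_comm] using this
  have : slope F 0 t = F t / t := by simp [slope_def_field, hF0]
  rw [this]
  rcases lt_or_gt_of_ne ht0 with h | h
  · have : F t ≤ 0 := by nlinarith
    exact div_nonneg_of_nonpos this h.le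
  · have : 0 ≤ F t := by nlinarith
    exact div_nonneg this h.le

/-- A positive semidefinite invertible endomorphism has positive determinant. -/
lemma det_pos_of_psd [FiniteDimensional ℝ E] (A : E →L[ℝ] E)
    (hpsd : ∀ v, 0 ≤ (inner ℝ (A v) v : ℝ)) (hne : A.det ≠ 0) : 0 < A.det := by
  set g : ℝ → ℝ := fun t => (t • (1 : E →L[ℝ] E) + (1 - t) • A).det with hg
  have hcont : Continuous g := by
    apply ContinuousLinearMap.continuous_det.comp
    continuity
  have hg0 : g 0 = A.det := by simp [hg]
  have hg1 : g 1 = 1 := by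
    simp only [hg, one_smul, sub_self, zero_smul, add_zero]
    show LinearMap.det _ = 1
    rw [ContinuousLinearMap.one_def, ContinuousLinearMap.coe_id, LinearMap.det_id]
  have hnz : ∀ t ∈ Set.Icc (0:ℝ) 1, g t ≠ 0 := by
    intro t ht hzero
    rcases eq_or_lt_of_le ht.1 with rfl | htpos
    · rw [hg0] at hzero; exact hne hzero
    · set B := t • (1 : E →L[ℝ] E) + (1 - t) • A with hB
      have : (B : E →ₗ[ℝ] E).det = 0 := hzero
      obtain ⟨v, hv, hv0⟩ : ∃ v, v ∈ LinearMap.ker (B : E →ₗ[ℝ] E) ∧ v ≠ 0 := by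
        have := LinearMap.bot_lt_ker_of_det_eq_zero this
        obtain ⟨v, hv, hv0⟩ := SetLike.exists_of_lt this
        exact ⟨v, hv, by simpa using hv0⟩
      have hBv : B v = 0 := hv
      have hpos : 0 < (inner ℝ (B v) v : ℝ) := by
        have heq : (inner ℝ (B v) v : ℝ) = t * ‖v‖^2 + (1 - t) * (inner ℝ (A v) v : ℝ) := by
          rw [hB]
          rw [ContinuousLinearMap.add_apply, ContinuousLinearMap.smul_apply,
            ContinuousLinearMap.smul_apply, ContinuousLinearMap.one_apply,
            inner_add_left, real_inner_smul_left, real_inner_smul_left,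
            real_inner_self_eq_norm_sq]
        rw [heq]
        have h1 : 0 < t * ‖v‖^2 := mul_pos htpos (pow_pos (norm_pos_iff.mpr hv0) 2)
        have h2 : 0 ≤ (1 - t) * (inner ℝ (A v) v : ℝ) :=
          mul_nonneg (by linarith [ht.2]) (hpsd v)
        linarith
      rw [hBv] at hpos
      simp at hpos
  by_contra hle
  push_neg at hle
  have hlt : A.det < 0 := lt_of_le_of_ne hle hne
  have := intermediate_value_Icc (zero_le_one) (hcont.continuousOn (s := Set.Icc (0:ℝ) 1))
  have h0mem : (0:ℝ) ∈ Set.Icc (g 0) (g 1) := by rw [hg0, hg1]; exact ⟨hlt.le, zero_le_one⟩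
  obtain ⟨t, ht, hgt⟩ := this h0mem
  exact hnz t ht hgt

end AuxLemmas

noncomputable def detHess {n : ℕ} (ψ : EuclideanSpace ℝ (Fin n) → ℝ)
    (x : EuclideanSpace ℝ (Fin n)) : ℝ :=
  LinearMap.det (fderiv ℝ (gradient ψ) x).toLinearMap

/-- Duality `D_f(P_{φ°}, Q_{φ°}) = D_{f*}(P_φ, Q_φ)` for a log-concave
function `φ = e^{−ψ}` with dual `φ° = e^{−Lψ}`, where `f` is convex or concave and
`f*(t) = t f(1/t)`.  Written in terms of `ψ` and its Legendre transform `L`, the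
integrand `e^{⟨∇φ,x⟩/φ} φ^{−2} det Hess(−ln φ)` equals
`e^{2ψ(x) − ⟨∇ψ(x),x⟩} det Hess ψ(x)`. -/
theorem fDivergence_polar_duality {n : ℕ}
    (f : ℝ → ℝ) (hf : ConvexOn ℝ (Set.Ioi (0 : ℝ)) f ∨ ConcaveOn ℝ (Set.Ioi (0 : ℝ)) f)
    (ψ L : EuclideanSpace ℝ (Fin n) → ℝ)
    (hψ : ContDiff ℝ 2 ψ) (hsc : StrictConvexOn ℝ Set.univ ψ)
    (hL : ∀ y, IsLUB (Set.range fun x => (inner ℝ x y : ℝ) - ψ x) (L y))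
    (hdiffeo : Function.Bijective (gradient ψ)) (hLC2 : ContDiff ℝ 2 L)
    (hint1 : Integrable (fun y =>
      Real.exp (-(L y)) * f (Real.exp (2 * L y - (inner ℝ (gradient L y) y : ℝ)) * detHess L y)))
    (hint2 : Integrable (fun x =>
      Real.exp (-(ψ x)) * ((Real.exp (2 * ψ x - (inner ℝ (gradient ψ x) x : ℝ)) * detHess ψ x) *
        f (1 / (Real.exp (2 * ψ x - (inner ℝ (gradient ψ x) x : ℝ)) * detHess ψ x))))) :
    (∫ y, Real.exp (-(L y)) *
        f (Real.exp (2 * L y - (inner ℝ (gradient L y) y : ℝ)) * detHess L y))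
      = ∫ x, Real.exp (-(ψ x)) *
          ((Real.exp (2 * ψ x - (inner ℝ (gradient ψ x) x : ℝ)) * detHess ψ x) *
            f (1 / (Real.exp (2 * ψ x - (inner ℝ (gradient ψ x) x : ℝ)) * detHess ψ x))) := by
  classical
  have hψd : Differentiable ℝ ψ := hψ.differentiable (by norm_num)
  have hLd : Differentiable ℝ L := hLC2.differentiable (by norm_num)
  have hψconv : ConvexOn ℝ Set.univ ψ := hsc.convexOn
  have hgradψ : ContDiff ℝ 1 (gradient ψ) := by
    have h1 : ContDiff ℝ 1 (fderiv ℝ ψ) := hψ.fderiv_right (by norm_num)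
    have := ((InnerProductSpace.toDual ℝ (EuclideanSpace ℝ (Fin n))).symm.contDiff).comp h1
    exact this
  have hgradL : ContDiff ℝ 1 (gradient L) := by
    have h1 : ContDiff ℝ 1 (fderiv ℝ L) := hLC2.fderiv_right (by norm_num)
    have := ((InnerProductSpace.toDual ℝ (EuclideanSpace ℝ (Fin n))).symm.contDiff).comp h1
    exact this
  have hgdψ : Differentiable ℝ (gradient ψ) := hgradψ.differentiable (by norm_num)
  have hgdL : Differentiable ℝ (gradient L) := hgradL.differentiable (by norm_num)
  -- (a) value of L at gradient points
  have hLa : ∀ x, L (gradient ψ x) = (inner ℝ x (gradient ψ x) : ℝ) - ψ x := by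
    intro x
    refine (hL (gradient ψ x)).unique (IsGreatest.isLUB ⟨⟨x, rfl⟩, ?_⟩)
    rintro z ⟨x', rfl⟩
    have h := subgrad_ineq hψconv hψd x x'
    have h2 : (inner ℝ (gradient ψ x) (x' - x) : ℝ)
        = (inner ℝ x' (gradient ψ x) : ℝ) - (inner ℝ x (gradient ψ x) : ℝ) := by
      rw [real_inner_comm]
      rw [inner_sub_left]
    rw [h2] at h
    simp only
    linarith
  -- lower bound for L
  have hlow : ∀ x y, (inner ℝ x y : ℝ) - ψ x ≤ L y := fun x y => (hL y).1 ⟨x, rfl⟩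
  -- (b) gradient of L inverts gradient of ψ
  have hgLi : ∀ x, gradient L (gradient ψ x) = x := by
    intro x
    set y₀ := gradient ψ x with hy₀
    set G : EuclideanSpace ℝ (Fin n) → ℝ := fun y => L y - (inner ℝ x y : ℝ) with hG
    have hmin : IsMinOn G Set.univ y₀ := by
      intro y _
      have h1 := hlow x y
      have h2 : L y₀ - (inner ℝ x y₀ : ℝ) = -ψ x := by
        rw [hLa x]
        ring
      show L y₀ - (inner ℝ x y₀ : ℝ) ≤ L y - (inner ℝ x y : ℝ)
      rw [h2]
      linarith
    have hloc : IsLocalMin G y₀ := hmin.isLocalMin Filter.univ_mem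
    have hdinner : HasFDerivAt (fun y => (inner ℝ x y : ℝ))
        ((InnerProductSpace.toDual ℝ (EuclideanSpace ℝ (Fin n)) x) :
          EuclideanSpace ℝ (Fin n) →L[ℝ] ℝ) y₀ := by
      have heq : (fun y => (inner ℝ x y : ℝ))
          = fun y => (InnerProductSpace.toDual ℝ (EuclideanSpace ℝ (Fin n)) x) y := by
        funext y; rw [toDual_apply_apply]
      rw [heq]
      exact (InnerProductSpace.toDual ℝ (EuclideanSpace ℝ (Fin n)) x).hasFDerivAt
    have hdG : HasFDerivAt G
        (fderiv ℝ L y₀ - InnerProductSpace.toDual ℝ (EuclideanSpace ℝ (Fin n)) x) y₀ :=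
      (hLd y₀).hasFDerivAt.sub hdinner
    have hfz : fderiv ℝ G y₀ = 0 := hloc.fderiv_eq_zero
    rw [hdG.fderiv] at hfz
    have hfe : fderiv ℝ L y₀ = InnerProductSpace.toDual ℝ (EuclideanSpace ℝ (Fin n)) x := by
      rwa [sub_eq_zero] at hfz
    show (InnerProductSpace.toDual ℝ (EuclideanSpace ℝ (Fin n))).symm (fderiv ℝ L y₀) = x
    rw [hfe]
    simp
  -- (c) determinant relation
  have hdet : ∀ x, detHess L (gradient ψ x) * detHess ψ x = 1 := by
    intro x
    have h1 : HasFDerivAt (gradient L ∘ gradient ψ)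
        ((fderiv ℝ (gradient L) (gradient ψ x)).comp (fderiv ℝ (gradient ψ) x)) x :=
      (hgdL _).hasFDerivAt.comp x (hgdψ x).hasFDerivAt
    have h2 : (gradient L ∘ gradient ψ) = id := funext hgLi
    rw [h2] at h1
    have h3 := h1.unique (hasFDerivAt_id x)
    have := congrArg (fun T : EuclideanSpace ℝ (Fin n) →L[ℝ] EuclideanSpace ℝ (Fin n) =>
      LinearMap.det T.toLinearMap) h3
    simpa [detHess, ContinuousLinearMap.coe_comp, LinearMap.det_comp,
      ContinuousLinearMap.coe_id, LinearMap.det_id] using this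
  have hDne : ∀ x, detHess ψ x ≠ 0 := by
    intro x h0
    have := hdet x
    rw [h0, mul_zero] at this
    norm_num at this
  have hDpos : ∀ x, 0 < detHess ψ x := by
    intro x
    have hpsd := hessian_psd hψconv hψd (hgdψ x)
    exact det_pos_of_psd (fderiv ℝ (gradient ψ) x) hpsd (hDne x)
  -- change of variables
  set Gt : EuclideanSpace ℝ (Fin n) → ℝ := fun y => Real.exp (-(L y)) *
      f (Real.exp (2 * L y - (inner ℝ (gradient L y) y : ℝ)) * detHess L y) with hGt
  have key := MeasureTheory.integral_image_eq_integral_abs_det_fderiv_smul (μ := volume)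
    MeasurableSet.univ
    (fun x _ => (hgdψ x).hasFDerivAt.hasFDerivWithinAt)
    (hdiffeo.injective.injOn) Gt
  rw [Set.image_univ, hdiffeo.surjective.range_eq] at key
  rw [Measure.restrict_univ] at key
  rw [show (∫ y, Real.exp (-(L y)) *
      f (Real.exp (2 * L y - (inner ℝ (gradient L y) y : ℝ)) * detHess L y)) = ∫ y, Gt y from rfl,
    key]
  refine integral_congr_ae (Filter.Eventually.of_forall fun x => ?_)
  -- pointwise identity
  set y₀ := gradient ψ x with hy₀
  set D := detHess ψ x with hD
  have hcm : (inner ℝ (gradient ψ x) x : ℝ) = (inner ℝ x y₀ : ℝ) := real_inner_comm _ _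
  have hinv : detHess L y₀ = D⁻¹ := eq_inv_of_mul_eq_one_left (hdet x)
  have habs : |(fderiv ℝ (gradient ψ) x).det| = D := by
    have : (fderiv ℝ (gradient ψ) x).det = D := rfl
    rw [this, abs_of_pos (hDpos x)]
  dsimp only
  rw [smul_eq_mul, habs]
  simp only [hGt]
  simp only [hLa x, hgLi x, hinv, hcm]
  rw [← hy₀, ← hD, hinv]
  have harg : Real.exp (2 * ((inner ℝ x y₀ : ℝ) - ψ x) - (inner ℝ x y₀ : ℝ)) * D⁻¹
      = 1 / (Real.exp (2 * ψ x - (inner ℝ x y₀ : ℝ)) * D) := by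
    rw [one_div, mul_inv, ← Real.exp_neg]
    ring_nf
  rw [harg]
  have hc : Real.exp (-(ψ x)) * Real.exp (2 * ψ x - (inner ℝ x y₀ : ℝ))
      = Real.exp (-((inner ℝ x y₀ : ℝ) - ψ x)) := by
    rw [← Real.exp_add]
    ring_nf
  rw [← hc]
  ring
end

section
/- Equality holds in the entropy inequality for Gaussians: if φ(x) = C e^{−⟨Ax,x⟩} with C > 0 and A an n×n positive definite symmetric matrix, then ∫ φ f( e^{⟨∇φ,x⟩/φ} φ^{−2} det(Hess(−ln φ)) ) dx = f( (∫ φ° dx)/(∫ φ dx) ) ∫ φ dx for every f : (0,∞) → ℝ. -/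
open Real MeasureTheory

section Aux

variable {n : ℕ}

lemma grad_quad (L : EuclideanSpace ℝ (Fin n) →L[ℝ] EuclideanSpace ℝ (Fin n))
    (hL : ∀ x y, (inner ℝ (L x) y : ℝ) = inner ℝ x (L y)) (c : ℝ) (x : EuclideanSpace ℝ (Fin n)) :
    HasGradientAt (fun x => (inner ℝ (L x) x : ℝ) - c) ((2 : ℝ) • L x) x := by
  rw [hasGradientAt_iff_hasFDerivAt]
  have h1 : HasFDerivAt (fun y : EuclideanSpace ℝ (Fin n) => L y) L x := L.hasFDerivAt
  have h2 := (HasFDerivAt.inner ℝ h1 (hasFDerivAt_id x)).sub_const c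
  refine h2.congr_fderiv ?_
  ext1 v
  simp [fderivInnerCLM_apply, hL, real_inner_smul_left, real_inner_comm (L x) v]
  ring

lemma det_toEuclideanLin (A : Matrix (Fin n) (Fin n) ℝ) :
    LinearMap.det (Matrix.toEuclideanLin A) = A.det := by
  rw [Matrix.toEuclideanLin_eq_toLin_orthonormal, LinearMap.det_toLin]

example (A : Matrix (Fin n) (Fin n) ℝ) :
    LinearMap.det ((2:ℝ) • Matrix.toEuclideanLin A) = 2 ^ n * A.det := by
  rw [LinearMap.det_smul, det_toEuclideanLin, finrank_euclideanSpace_fin]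

lemma integral_comp_lin (T : EuclideanSpace ℝ (Fin n) →ₗ[ℝ] EuclideanSpace ℝ (Fin n))
    (hT : LinearMap.det T ≠ 0) (g : EuclideanSpace ℝ (Fin n) → ℝ)
    (hg : AEStronglyMeasurable g volume) :
    ∫ x, g (T x) = |LinearMap.det T|⁻¹ * ∫ y, g y := by
  have hTc : Continuous T := T.continuous_of_finiteDimensional
  have h := Measure.map_linearMap_addHaar_eq_smul_addHaar
    (volume : Measure (EuclideanSpace ℝ (Fin n))) hT
  have hg' : AEStronglyMeasurable g (Measure.map T volume) := by
    rw [h]; exact hg.mono_ac (Measure.smul_absolutelyContinuous)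
  rw [← MeasureTheory.integral_map hTc.aemeasurable hg', h,
    MeasureTheory.integral_smul_measure]
  rw [ENNReal.toReal_ofReal (abs_nonneg _), abs_inv, smul_eq_mul]

lemma integrable_comp_lin (T : EuclideanSpace ℝ (Fin n) →ₗ[ℝ] EuclideanSpace ℝ (Fin n))
    (hT : LinearMap.det T ≠ 0) (g : EuclideanSpace ℝ (Fin n) → ℝ)
    (hg : AEStronglyMeasurable g volume) (hgi : Integrable g) :
    Integrable (fun x => g (T x)) := by
  have hTc : Continuous T := T.continuous_of_finiteDimensional
  have h := Measure.map_linearMap_addHaar_eq_smul_addHaar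
    (volume : Measure (EuclideanSpace ℝ (Fin n))) hT
  have hg' : AEStronglyMeasurable g (Measure.map T volume) := by
    rw [h]; exact hg.mono_ac (Measure.smul_absolutelyContinuous)
  rw [show (fun x => g (T x)) = g ∘ T from rfl,
    ← MeasureTheory.integrable_map_measure hg' hTc.aemeasurable, h]
  exact hgi.smul_measure ENNReal.ofReal_ne_top

lemma euclid_inner_lin (A : Matrix (Fin n) (Fin n) ℝ) (x y : EuclideanSpace ℝ (Fin n)) :
    (inner ℝ (Matrix.toEuclideanLin A x) y : ℝ) = dotProduct (A.mulVec x) y := by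
  simp only [PiLp.inner_apply, Matrix.toEuclideanLin_apply, dotProduct, WithLp.equiv,
    Equiv.refl_apply, RCLike.inner_apply, conj_trivial]
  exact Finset.sum_congr rfl fun i _ => mul_comm _ _

lemma lin_symm (A : Matrix (Fin n) (Fin n) ℝ) (hAsymm : A.IsSymm)
    (x y : EuclideanSpace ℝ (Fin n)) :
    (inner ℝ (Matrix.toEuclideanLin A x) y : ℝ) = inner ℝ x (Matrix.toEuclideanLin A y) := by
  rw [euclid_inner_lin, real_inner_comm, euclid_inner_lin]
  nth_rewrite 2 [← hAsymm.eq]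
  simp only [dotProduct, Matrix.mulVec, Matrix.transpose_apply, Finset.sum_mul]
  rw [Finset.sum_comm]
  exact Finset.sum_congr rfl fun i _ => Finset.sum_congr rfl fun j _ => by ring

lemma lin_pos (A : Matrix (Fin n) (Fin n) ℝ) (hA : A.PosDef)
    (x : EuclideanSpace ℝ (Fin n)) (hx : x ≠ 0) :
    0 < (inner ℝ (Matrix.toEuclideanLin A x) x : ℝ) := by
  rw [euclid_inner_lin, dotProduct_comm]
  have := hA.dotProduct_mulVec_pos (x := x.ofLp) (by exact fun h => hx (by ext i; exact congrFun h i))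
  simpa using this

lemma toEuclideanLin_mul (M N : Matrix (Fin n) (Fin n) ℝ) (x : EuclideanSpace ℝ (Fin n)) :
    Matrix.toEuclideanLin (M * N) x = Matrix.toEuclideanLin M (Matrix.toEuclideanLin N x) := by
  simp only [Matrix.toEuclideanLin_apply, WithLp.equiv, Equiv.refl_apply, Equiv.symm_apply_apply,
    ← Matrix.mulVec_mulVec]

lemma integrable_gauss_std :
    Integrable (fun v : EuclideanSpace ℝ (Fin n) => rexp (-‖v‖ ^ 2)) := by
  have h := GaussianFourier.integrable_cexp_neg_mul_sq_norm_add
    (V := EuclideanSpace ℝ (Fin n)) (b := 1) (by norm_num) 0 0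
  have h2 := h.norm
  refine h2.congr (Filter.Eventually.of_forall fun v => ?_)
  simp [Complex.norm_exp]
  norm_cast

lemma exp_neg_psi_integrable_and (A : Matrix (Fin n) (Fin n) ℝ) (hA : A.PosDef) (C : ℝ)
    (hC : 0 < C) :
    Integrable (fun x : EuclideanSpace ℝ (Fin n) =>
        rexp (-((inner ℝ (Matrix.toEuclideanLin A x) x : ℝ) - Real.log C)))
      ∧ 0 < ∫ x : EuclideanSpace ℝ (Fin n),
          rexp (-((inner ℝ (Matrix.toEuclideanLin A x) x : ℝ) - Real.log C)) := by
  classical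
  open scoped MatrixOrder in
  set S := CFC.sqrt A with hSdef
  open scoped MatrixOrder in
  have hSS : S * S = A := CFC.sqrt_mul_sqrt_self A hA.posSemidef.nonneg
  open scoped MatrixOrder in
  have hSherm : S.IsHermitian := (Matrix.nonneg_iff_posSemidef.mp (CFC.sqrt_nonneg A)).1
  have hSsymm : S.IsSymm := by
    rw [Matrix.IsSymm, ← Matrix.conjTranspose_eq_transpose_of_trivial, hSherm.eq]
  have hdetS : S.det ≠ 0 := by
    intro h
    have : A.det = 0 := by rw [← hSS, Matrix.det_mul, h, mul_zero]
    exact (ne_of_gt hA.det_pos) this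
  have key : ∀ x : EuclideanSpace ℝ (Fin n),
      (inner ℝ (Matrix.toEuclideanLin A x) x : ℝ) = ‖Matrix.toEuclideanLin S x‖ ^ 2 := by
    intro x
    rw [← hSS, toEuclideanLin_mul, lin_symm S hSsymm, real_inner_self_eq_norm_sq]
  have hptw : ∀ x : EuclideanSpace ℝ (Fin n),
      rexp (-((inner ℝ (Matrix.toEuclideanLin A x) x : ℝ) - Real.log C))
        = C * rexp (-‖Matrix.toEuclideanLin S x‖ ^ 2) := by
    intro x
    rw [neg_sub, Real.exp_sub, Real.exp_log hC, key, Real.exp_neg]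
    ring
  have hdetS' : LinearMap.det (Matrix.toEuclideanLin S) ≠ 0 := by
    rwa [det_toEuclideanLin]
  have hgi : Integrable (fun v : EuclideanSpace ℝ (Fin n) => C * rexp (-‖v‖ ^ 2)) :=
    integrable_gauss_std.const_mul C
  have hgm : AEStronglyMeasurable (fun v : EuclideanSpace ℝ (Fin n) => C * rexp (-‖v‖ ^ 2))
      volume := hgi.1
  constructor
  · refine (integrable_comp_lin (Matrix.toEuclideanLin S) hdetS'
      (fun v => C * rexp (-‖v‖ ^ 2)) hgm hgi).congr ?_
    exact Filter.Eventually.of_forall fun x => (hptw x).symm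
  · have h1 : ∫ x : EuclideanSpace ℝ (Fin n),
        rexp (-((inner ℝ (Matrix.toEuclideanLin A x) x : ℝ) - Real.log C))
        = |LinearMap.det (Matrix.toEuclideanLin S)|⁻¹
          * ∫ v : EuclideanSpace ℝ (Fin n), C * rexp (-‖v‖ ^ 2) := by
      rw [← integral_comp_lin (Matrix.toEuclideanLin S) hdetS' _ hgm]
      exact integral_congr_ae (Filter.Eventually.of_forall fun x => hptw x)
    rw [h1, integral_const_mul]
    have h2 : ∫ v : EuclideanSpace ℝ (Fin n), rexp (-‖v‖ ^ 2)
        = (π / 1) ^ ((Module.finrank ℝ (EuclideanSpace ℝ (Fin n))) / 2 : ℝ) := by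
      rw [← GaussianFourier.integral_rexp_neg_mul_sq_norm (by norm_num : (0:ℝ) < 1)]
      simp
    have hpos2 : 0 < ∫ v : EuclideanSpace ℝ (Fin n), rexp (-‖v‖ ^ 2) := by
      rw [h2]; positivity
    have : 0 < |LinearMap.det (Matrix.toEuclideanLin S)|⁻¹ := by
      positivity
    positivity

lemma lin_nonneg (A : Matrix (Fin n) (Fin n) ℝ) (hA : A.PosDef)
    (x : EuclideanSpace ℝ (Fin n)) : 0 ≤ (inner ℝ (Matrix.toEuclideanLin A x) x : ℝ) := by
  rcases eq_or_ne x 0 with h | h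
  · simp [h]
  · exact le_of_lt (lin_pos A hA x h)

lemma phio_comp (A : Matrix (Fin n) (Fin n) ℝ) (hA : A.PosDef) (hAsymm : A.IsSymm)
    (C : ℝ) (hC : 0 < C)
    (ψ : EuclideanSpace ℝ (Fin n) → ℝ)
    (hψ : ψ = fun x => (inner ℝ (Matrix.toEuclideanLin A x) x : ℝ) - Real.log C)
    (φo : EuclideanSpace ℝ (Fin n) → ℝ)
    (hφo : ∀ x, IsGLB (Set.range fun y =>
      Real.exp (-(inner ℝ x y : ℝ)) / Real.exp (-(ψ y))) (φo x))
    (y : EuclideanSpace ℝ (Fin n)) :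
    φo ((2:ℝ) • Matrix.toEuclideanLin A y) = rexp (-(ψ y)) / C ^ 2 := by
  set L := Matrix.toEuclideanLin A with hL
  have hform : ∀ z, rexp (-(inner ℝ ((2:ℝ) • L y) z : ℝ)) / rexp (-(ψ z))
      = rexp ((inner ℝ (L z) z : ℝ) - Real.log C - 2 * (inner ℝ (L y) z : ℝ)) := by
    intro z
    rw [← Real.exp_sub, hψ]
    congr 1
    rw [real_inner_smul_left]
    ring
  have hval : rexp (-(ψ y)) / C ^ 2
      = rexp ((inner ℝ (L y) y : ℝ) - Real.log C - 2 * (inner ℝ (L y) y : ℝ)) := by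
    have h1 : ((inner ℝ (L y) y : ℝ) - Real.log C - 2 * (inner ℝ (L y) y : ℝ))
        = -(inner ℝ (L y) y : ℝ) + -Real.log C := by ring
    have h2 : -(ψ y) = -(inner ℝ (L y) y : ℝ) + Real.log C := by rw [hψ]; ring
    rw [h1, h2]
    simp only [Real.exp_add, Real.exp_neg, Real.exp_log hC]
    field_simp
  refine (hφo _).unique (IsLeast.isGLB ⟨?_, ?_⟩)
  · exact ⟨y, by simp only [hform]; exact hval.symm⟩
  · rintro v ⟨z, rfl⟩
    simp only [hform]
    rw [hval, Real.exp_le_exp]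
    have hnn := lin_nonneg A hA (z - y)
    have he : (inner ℝ (L (z - y)) (z - y) : ℝ)
        = (inner ℝ (L z) z : ℝ) - 2 * (inner ℝ (L y) z : ℝ) + (inner ℝ (L y) y : ℝ) := by
      rw [map_sub, inner_sub_left, inner_sub_right, inner_sub_right]
      have h1 : (inner ℝ (L z) y : ℝ) = (inner ℝ (L y) z : ℝ) := by
        rw [lin_symm A hAsymm z y, real_inner_comm]
      rw [h1]
      ring
    rw [he] at hnn
    linarith

end Aux

/-- Equality in the entropy inequality for Gaussians: for
`φ(x) = C e^{−⟨Ax,x⟩}` with `C > 0` and `A` positive definite symmetric, and any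
`f : (0,∞) → ℝ`,
`∫ φ f( e^{⟨∇φ,x⟩/φ} φ^{−2} det Hess(−ln φ) ) dx = f( (∫φ°)/(∫φ) ) ∫ φ dx`,
where `φ°(x) = inf_y e^{−⟨x,y⟩}/φ(y)`. -/
theorem entropy_equality_gaussian {n : ℕ}
    (A : Matrix (Fin n) (Fin n) ℝ) (hA : A.PosDef) (hAsymm : A.IsSymm)
    (C : ℝ) (hC : 0 < C) (f : ℝ → ℝ)
    (ψ : EuclideanSpace ℝ (Fin n) → ℝ)
    (hψ : ψ = fun x => (inner ℝ (Matrix.toEuclideanLin A x) x : ℝ) - Real.log C)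
    (φo : EuclideanSpace ℝ (Fin n) → ℝ)
    (hφo : ∀ x, IsGLB (Set.range fun y =>
      Real.exp (-(inner ℝ x y : ℝ)) / Real.exp (-(ψ y))) (φo x)) :
    (∫ x, Real.exp (-(ψ x)) *
        f (Real.exp (2 * ψ x - (inner ℝ (gradient ψ x) x : ℝ)) * detHess ψ x))
      = f ((∫ x, φo x) / (∫ x, Real.exp (-(ψ x)))) * ∫ x, Real.exp (-(ψ x)) := by
  set L := Matrix.toEuclideanLin A with hLdef
  set Lc : EuclideanSpace ℝ (Fin n) →L[ℝ] EuclideanSpace ℝ (Fin n) :=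
    LinearMap.toContinuousLinearMap L with hLcdef
  have hLc : ∀ x, Lc x = L x := fun x => rfl
  have hLsym : ∀ x y, (inner ℝ (Lc x) y : ℝ) = inner ℝ x (Lc y) := fun x y =>
    lin_symm A hAsymm x y
  -- gradient
  have hgradAt : ∀ x, HasGradientAt ψ ((2:ℝ) • Lc x) x := by
    intro x
    rw [hψ]
    exact grad_quad Lc hLsym (Real.log C) x
  have hgrad : gradient ψ = fun x => (2:ℝ) • Lc x := gradient_eq hgradAt
  -- detHess
  have hdet : ∀ x, detHess ψ x = 2 ^ n * A.det := by
    intro x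
    unfold detHess
    rw [hgrad]
    have h1 : (fun x : EuclideanSpace ℝ (Fin n) => (2:ℝ) • Lc x) = ⇑((2:ℝ) • Lc) := by
      ext v i; simp
    have h2 : ((2:ℝ) • Lc).toLinearMap = (2:ℝ) • L := by
      ext v i; simp [hLc]
    rw [h1, ContinuousLinearMap.fderiv, h2, LinearMap.det_smul, det_toEuclideanLin,
      finrank_euclideanSpace_fin]
  set c : ℝ := 2 ^ n * A.det / C ^ 2 with hcdef
  -- the argument of f is constantly c
  have harg : ∀ x, Real.exp (2 * ψ x - (inner ℝ (gradient ψ x) x : ℝ)) * detHess ψ x = c := by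
    intro x
    rw [hgrad, hdet x]
    have h1 : (inner ℝ ((2:ℝ) • Lc x) x : ℝ) = 2 * (inner ℝ (L x) x : ℝ) := by
      rw [real_inner_smul_left]; rfl
    have h2 : 2 * ψ x - 2 * (inner ℝ (L x) x : ℝ) = -Real.log C + -Real.log C := by
      rw [hψ]; ring
    simp only [h1, h2]
    rw [Real.exp_add, Real.exp_neg, Real.exp_log hC, hcdef, pow_two, div_eq_mul_inv, mul_inv]
    ring
  -- integrability and positivity
  obtain ⟨hint, hpos⟩ := exp_neg_psi_integrable_and A hA C hC
  have hψfun : (fun x => Real.exp (-(ψ x)))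
      = fun x : EuclideanSpace ℝ (Fin n) =>
          rexp (-((inner ℝ (Matrix.toEuclideanLin A x) x : ℝ) - Real.log C)) := by
    rw [hψ]
  rw [← hψfun] at hint hpos
  -- the equiv
  have hdetT : LinearMap.det ((2:ℝ) • L) = 2 ^ n * A.det := by
    rw [LinearMap.det_smul, det_toEuclideanLin, finrank_euclideanSpace_fin]
  have hdetA : (0:ℝ) < A.det := hA.det_pos
  have hdetTpos : (0:ℝ) < LinearMap.det ((2:ℝ) • L) := by
    rw [hdetT]; positivity
  have hTinj : Function.Injective ((2:ℝ) • L) := by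
    rw [← LinearMap.ker_eq_bot, LinearMap.ker_eq_bot']
    intro z hz
    by_contra hzne
    have hLz : L z = 0 := by
      have : (2:ℝ) • L z = 0 := hz
      have := smul_eq_zero.mp this
      rcases this with h | h
      · norm_num at h
      · exact h
    have := lin_pos A hA z hzne
    rw [hLz] at this
    simp at this
  set Te := LinearEquiv.ofInjectiveEndo ((2:ℝ) • L) hTinj with hTedef
  have hTeapp : ∀ y, Te y = (2:ℝ) • L y := fun y => rfl
  have hφoeq : φo = fun x => rexp (-(ψ (Te.symm x))) / C ^ 2 := by
    funext x
    have h := phio_comp A hA hAsymm C hC ψ hψ φo hφo (Te.symm x)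
    have h2 : (2:ℝ) • Matrix.toEuclideanLin A (Te.symm x) = x := by
      have h3 : Te (Te.symm x) = x := Te.apply_symm_apply x
      rw [hTeapp] at h3
      exact h3
    rw [h2] at h
    exact h
  -- continuity of ψ
  have hψcont : Continuous ψ := by
    rw [hψ]
    exact (Lc.continuous.inner continuous_id).sub continuous_const
  have hgcont : Continuous (fun u : EuclideanSpace ℝ (Fin n) => rexp (-(ψ u)) / C ^ 2) :=
    ((hψcont.neg.rexp)).div_const _
  have hdetTinv : LinearMap.det Te.symm.toLinearMap = (LinearMap.det ((2:ℝ) • L))⁻¹ := by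
    have hcomp : Te.symm.toLinearMap ∘ₗ ((2:ℝ) • L) = LinearMap.id := by
      refine LinearMap.ext fun v => ?_
      simp only [LinearMap.coe_comp, Function.comp_apply, LinearMap.id_coe, id_eq]
      have : ((2:ℝ) • L) v = Te v := (hTeapp v).symm
      rw [this]
      exact Te.symm_apply_apply v
    have h5 := congrArg LinearMap.det hcomp
    rw [LinearMap.det_comp, LinearMap.det_id] at h5
    exact eq_inv_of_mul_eq_one_left h5
  have hdetTinvne : LinearMap.det Te.symm.toLinearMap ≠ 0 := by
    rw [hdetTinv]
    exact inv_ne_zero (ne_of_gt hdetTpos)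
  have hφoint : ∫ x, φo x
      = LinearMap.det ((2:ℝ) • L) * ((∫ x, Real.exp (-(ψ x))) / C ^ 2) := by
    rw [hφoeq]
    have : (fun x => rexp (-(ψ (Te.symm x))) / C ^ 2)
        = fun x => (fun u => rexp (-(ψ u)) / C ^ 2) (Te.symm.toLinearMap x) := rfl
    rw [this, integral_comp_lin Te.symm.toLinearMap hdetTinvne _
      hgcont.aestronglyMeasurable, hdetTinv, abs_inv, inv_inv,
      abs_of_pos hdetTpos, integral_div]
  have hratio : (∫ x, φo x) / (∫ x, Real.exp (-(ψ x))) = c := by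
    rw [hφoint, hdetT, hcdef]
    field_simp
  calc (∫ x, Real.exp (-(ψ x)) *
        f (Real.exp (2 * ψ x - (inner ℝ (gradient ψ x) x : ℝ)) * detHess ψ x))
      = ∫ x, Real.exp (-(ψ x)) * f c := by
        congr 1
        funext x
        rw [harg x]
    _ = (∫ x, Real.exp (-(ψ x))) * f c := by rw [integral_mul_const]
    _ = f ((∫ x, φo x) / (∫ x, Real.exp (-(ψ x)))) * ∫ x, Real.exp (-(ψ x)) := by
        rw [hratio]; ring
end

section
/- Let f : (0,∞) → ℝ be convex or concave, and φ, φ∘A log-concave, where A : ℝⁿ → ℝⁿ is a self-adjoint linear map with det A = 1. Then D_f(P_{φ∘A}, Q_{φ∘A}) = D_f(P_φ, Q_φ), where D_f(P_φ, Q_φ) = ∫_{supp φ} φ f( e^{⟨∇φ,x⟩/φ} φ^{−2} det(Hess(−ln φ)) ) dx. -/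
open Real MeasureTheory

section aux

variable {n : ℕ} {ψ : EuclideanSpace ℝ (Fin n) → ℝ}
  {A : EuclideanSpace ℝ (Fin n) →L[ℝ] EuclideanSpace ℝ (Fin n)}

lemma gradient_comp_clm (hψ : ContDiff ℝ 2 ψ) (hAsa : IsSelfAdjoint A) :
    gradient (fun y => ψ (A y)) = fun x => A (gradient ψ (A x)) := by
  funext x
  apply ext_inner_right ℝ
  intro v
  have hd : DifferentiableAt ℝ ψ (A x) :=
    (hψ.differentiable (by norm_num)).differentiableAt
  have hfd : fderiv ℝ (fun y => ψ (A y)) x = (fderiv ℝ ψ (A x)).comp A := by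
    have := fderiv_comp (𝕜 := ℝ) x hd (A.differentiableAt (x := x))
    simpa [Function.comp_def, A.fderiv] using this
  have h1 : (inner ℝ (gradient (fun y => ψ (A y)) x) v : ℝ)
      = fderiv ℝ (fun y => ψ (A y)) x v := by
    simp [gradient, InnerProductSpace.toDual_symm_apply]
  have h2 : (inner ℝ (gradient ψ (A x)) (A v) : ℝ) = fderiv ℝ ψ (A x) (A v) := by
    simp [gradient, InnerProductSpace.toDual_symm_apply]
  rw [h1, hfd]
  have := hAsa.isSymmetric (gradient ψ (A x)) v
  simp only [ContinuousLinearMap.coe_comp', Function.comp_apply]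
  rw [← h2]
  exact this.symm

lemma detHess_comp_clm (hψ : ContDiff ℝ 2 ψ) (hAsa : IsSelfAdjoint A)
    (hAdet : LinearMap.det A.toLinearMap = 1) (x) :
    detHess (fun y => ψ (A y)) x = detHess ψ (A x) := by
  have hgd : Differentiable ℝ (gradient ψ) := by
    have h1 : ContDiff ℝ 1 (fderiv ℝ ψ) := hψ.fderiv_right (le_refl _)
    have : gradient ψ = fun y =>
        (InnerProductSpace.toDual ℝ (EuclideanSpace ℝ (Fin n))).symm (fderiv ℝ ψ y) := rfl
    rw [this]
    exact fun y => ((InnerProductSpace.toDual ℝ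
      (EuclideanSpace ℝ (Fin n))).symm.toContinuousLinearEquiv.differentiableAt).comp y
      (h1.differentiable (by norm_num) y)
  have hcomp : gradient (fun y => ψ (A y)) = fun x => A (gradient ψ (A x)) :=
    gradient_comp_clm hψ hAsa
  have hfd : fderiv ℝ (gradient (fun y => ψ (A y))) x
      = (A.comp (fderiv ℝ (gradient ψ) (A x))).comp A := by
    rw [hcomp]
    have hinner : DifferentiableAt ℝ (fun x => gradient ψ (A x)) x :=
      ((hgd (A x)).comp x (A.differentiableAt (x := x)))
    have h1 : fderiv ℝ (fun x => A (gradient ψ (A x))) x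
        = A.comp (fderiv ℝ (fun x => gradient ψ (A x)) x) := by
      have := fderiv_comp (𝕜 := ℝ) x (A.differentiableAt
        (x := gradient ψ (A x))) hinner
      simpa [Function.comp_def, A.fderiv] using this
    have h2 : fderiv ℝ (fun x => gradient ψ (A x)) x
        = (fderiv ℝ (gradient ψ) (A x)).comp A := by
      have := fderiv_comp (𝕜 := ℝ) x (hgd (A x)) (A.differentiableAt (x := x))
      simpa [Function.comp_def, A.fderiv] using this
    rw [h1, h2, ContinuousLinearMap.comp_assoc]
  rw [detHess, hfd]
  simp only [ContinuousLinearMap.coe_comp]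
  rw [ContinuousLinearMap.toLinearMap_comp, ContinuousLinearMap.toLinearMap_comp, LinearMap.det_comp, LinearMap.det_comp, hAdet]
  ring_nf
  rfl

lemma measurePreserving_clm (hAdet : LinearMap.det A.toLinearMap = 1) :
    MeasurePreserving A (volume : Measure (EuclideanSpace ℝ (Fin n))) volume := by
  refine ⟨A.continuous.measurable, ?_⟩
  have : Measure.map A.toLinearMap (volume : Measure (EuclideanSpace ℝ (Fin n)))
      = ENNReal.ofReal |(LinearMap.det A.toLinearMap)⁻¹| • volume :=
    Measure.map_linearMap_addHaar_eq_smul_addHaar volume (by rw [hAdet]; norm_num)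
  simpa [hAdet] using this

end aux

/-- Affine invariance of the `f`-divergence of a log-concave function
`φ = e^{−ψ}` under a self-adjoint linear map `A` with `det A = 1`:
`D_f(P_{φ∘A}, Q_{φ∘A}) = D_f(P_φ, Q_φ)`, where
`D_f(P_φ,Q_φ) = ∫ φ f( e^{⟨∇φ,x⟩/φ} φ^{−2} det Hess(−ln φ) ) dx
             = ∫ e^{−ψ} f( e^{2ψ−⟨∇ψ,x⟩} det Hess ψ ) dx`. -/
theorem fDivergence_affine_invariance {n : ℕ}
    (f : ℝ → ℝ) (hf : ConvexOn ℝ (Set.Ioi (0 : ℝ)) f ∨ ConcaveOn ℝ (Set.Ioi (0 : ℝ)) f)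
    (ψ : EuclideanSpace ℝ (Fin n) → ℝ)
    (hψconv : ConvexOn ℝ Set.univ ψ) (hψ : ContDiff ℝ 2 ψ)
    (A : EuclideanSpace ℝ (Fin n) →L[ℝ] EuclideanSpace ℝ (Fin n))
    (hAsa : IsSelfAdjoint A) (hAdet : LinearMap.det A.toLinearMap = 1)
    (hint : Integrable (fun x => Real.exp (-(ψ x)) *
      f (Real.exp (2 * ψ x - (inner ℝ (gradient ψ x) x : ℝ)) * detHess ψ x))) :
    (∫ x, Real.exp (-(ψ (A x))) *
        f (Real.exp (2 * ψ (A x) - (inner ℝ (gradient (fun y => ψ (A y)) x) x : ℝ))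
            * detHess (fun y => ψ (A y)) x))
      = ∫ x, Real.exp (-(ψ x)) *
          f (Real.exp (2 * ψ x - (inner ℝ (gradient ψ x) x : ℝ)) * detHess ψ x) := by
  have hdet : A.det ≠ 0 := by
    show LinearMap.det A.toLinearMap ≠ 0
    rw [hAdet]; norm_num
  have hemb : MeasurableEmbedding (⇑A) := by
    have h := (A.toContinuousLinearEquivOfDetNeZero hdet).toHomeomorph.measurableEmbedding
    have he : ⇑(A.toContinuousLinearEquivOfDetNeZero hdet).toHomeomorph = ⇑A := rfl
    rwa [he] at h
  have hmp := measurePreserving_clm (A := A) hAdet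
  have key := hmp.integral_comp hemb (fun y => Real.exp (-(ψ y)) *
      f (Real.exp (2 * ψ y - (inner ℝ (gradient ψ y) y : ℝ)) * detHess ψ y))
  rw [← key]
  congr 1
  funext x
  simp only [gradient_comp_clm hψ hAsa, detHess_comp_clm hψ hAsa hAdet]
  have h : (inner ℝ (A (gradient ψ (A x))) x : ℝ) = inner ℝ (gradient ψ (A x)) (A x) :=
    hAsa.isSymmetric _ _
  rw [h]
end

section
/- Let φ : ℝⁿ → [0,∞) be log-concave (smooth, with det Hess(−ln φ) > 0 on supp φ) and let α, β, λ ∈ ℝ with α ≠ β, λ ≠ β and 1 ≤ (α−β)/(λ−β) < ∞. Then as_λ(φ) ≤ as_α(φ)^{(λ−β)/(α−β)} · as_β(φ)^{(α−λ)/(α−β)}, where as_λ(φ) = ∫_{supp φ} φ ( e^{⟨∇φ,x⟩/φ} φ^{−2} det(Hess(−ln φ)) )^λ dx. -/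
open Real MeasureTheory

/-- Auxiliary: `MemLp` of a power of a nonnegative integrable function. -/
lemma memℒp_rpow_of_integrable {X : Type*} [MeasurableSpace X] {μ : Measure X}
    {F : X → ℝ} (hF : Integrable F μ) (hF0 : ∀ x, 0 ≤ F x) {θ : ℝ} (hθ0 : 0 < θ) :
    MemLp (fun x => F x ^ θ) (ENNReal.ofReal (1 / θ)) μ := by
  have h1 : MemLp F 1 μ := memLp_one_iff_integrable.mpr hF
  have := (memLp_norm_rpow_iff (p := 1) (q := ENNReal.ofReal θ) h1.1
    (by simpa using hθ0) (by simp)).mpr h1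
  have heq : (fun x : X => ‖F x‖ ^ (ENNReal.ofReal θ).toReal) = fun x => F x ^ θ := by
    funext x
    rw [Real.norm_of_nonneg (hF0 x), ENNReal.toReal_ofReal hθ0.le]
  rw [heq] at this
  convert this using 2
  rw [one_div, ENNReal.ofReal_inv_of_pos hθ0, one_div]

/-- Monotonicity (Hölder) for `L_λ`-affine surface areas of a log-concave
function `φ = e^{−ψ}` (smooth, with `det Hess(−ln φ) > 0`): if `α ≠ β`, `λ ≠ β` and
`1 ≤ (α−β)/(λ−β)`, then
`as_λ(φ) ≤ as_α(φ)^{(λ−β)/(α−β)} · as_β(φ)^{(α−λ)/(α−β)}`, where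
`as_λ(φ) = ∫ φ ( e^{⟨∇φ,x⟩/φ} φ^{−2} det Hess(−ln φ) )^λ dx
         = ∫ e^{−ψ} ( e^{2ψ−⟨∇ψ,x⟩} det Hess ψ )^λ dx`. -/
theorem affineSurfaceArea_holder {n : ℕ}
    (ψ : EuclideanSpace ℝ (Fin n) → ℝ)
    (hψ : ContDiff ℝ 2 ψ)
    (hpos : ∀ x, 0 < detHess ψ x)
    (α β lam : ℝ) (hαβ : α ≠ β) (hlamβ : lam ≠ β)
    (hratio : 1 ≤ (α - β) / (lam - β))
    (h : EuclideanSpace ℝ (Fin n) → ℝ)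
    (hh : h = fun x => Real.exp (2 * ψ x - (inner ℝ (gradient ψ x) x : ℝ)) * detHess ψ x)
    (hintlam : Integrable (fun x => Real.exp (-(ψ x)) * h x ^ lam))
    (hintα : Integrable (fun x => Real.exp (-(ψ x)) * h x ^ α))
    (hintβ : Integrable (fun x => Real.exp (-(ψ x)) * h x ^ β)) :
    (∫ x, Real.exp (-(ψ x)) * h x ^ lam)
      ≤ (∫ x, Real.exp (-(ψ x)) * h x ^ α) ^ ((lam - β) / (α - β))
        * (∫ x, Real.exp (-(ψ x)) * h x ^ β) ^ ((α - lam) / (α - β)) := by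
  have hh0 : ∀ x, 0 < h x := by
    intro x; rw [hh]; exact mul_pos (Real.exp_pos _) (hpos x)
  set θ : ℝ := (lam - β) / (α - β) with hθdef
  have hαβ' : α - β ≠ 0 := sub_ne_zero.mpr hαβ
  have hlamβ' : lam - β ≠ 0 := sub_ne_zero.mpr hlamβ
  have hθmul : θ * (α - β) = lam - β := by
    rw [hθdef]; exact div_mul_cancel₀ _ hαβ'
  have hθinv : θ = ((α - β) / (lam - β))⁻¹ := by
    rw [hθdef, inv_div]
  have hθ0 : 0 < θ := by
    rw [hθinv]; exact inv_pos.mpr (lt_of_lt_of_le zero_lt_one hratio)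
  have hθ1 : θ ≤ 1 := by
    rw [hθinv]; exact inv_le_one_of_one_le₀ hratio
  have hexp2 : (α - lam) / (α - β) = 1 - θ := by
    rw [hθdef]; field_simp; ring
  rw [hexp2]
  have hlam' : lam = θ * (α - β) + β := by linarith [hθmul]
  have hsum : θ * α + (1 - θ) * β = lam := by rw [hlam']; ring
  rcases eq_or_lt_of_le hθ1 with hθeq | hθlt
  · -- θ = 1, so lam = α
    have hlamα : lam = α := by
      rw [hθeq] at hθmul; linarith
    rw [hlamα, hθeq, sub_self, Real.rpow_zero, mul_one, Real.rpow_one]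
  · -- 0 < θ < 1 : genuine Hölder
    set p : ℝ := 1 / θ with hp
    set q : ℝ := 1 / (1 - θ) with hq
    have h1θ : 0 < 1 - θ := by linarith
    have hpq : Real.HolderConjugate p q := by
      rw [Real.holderConjugate_iff]; constructor
      · rw [hp]; rw [lt_div_iff₀ hθ0]; linarith
      · rw [hp, hq]; field_simp; ring
    set F : EuclideanSpace ℝ (Fin n) → ℝ := fun x => Real.exp (-(ψ x)) * h x ^ α with hF
    set G : EuclideanSpace ℝ (Fin n) → ℝ := fun x => Real.exp (-(ψ x)) * h x ^ β with hG
    have hF0 : ∀ x, 0 ≤ F x := fun x =>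
      mul_nonneg (Real.exp_pos _).le (Real.rpow_nonneg (hh0 x).le _)
    have hG0 : ∀ x, 0 ≤ G x := fun x =>
      mul_nonneg (Real.exp_pos _).le (Real.rpow_nonneg (hh0 x).le _)
    have hf : MemLp (fun x => F x ^ θ) (ENNReal.ofReal p) volume := by
      rw [hp]; exact memℒp_rpow_of_integrable hintα hF0 hθ0
    have hg : MemLp (fun x => G x ^ (1 - θ)) (ENNReal.ofReal q) volume := by
      rw [hq]; exact memℒp_rpow_of_integrable hintβ hG0 h1θ
    have key := integral_mul_le_Lp_mul_Lq_of_nonneg hpq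
      (Filter.Eventually.of_forall fun x => Real.rpow_nonneg (hF0 x) θ)
      (Filter.Eventually.of_forall fun x => Real.rpow_nonneg (hG0 x) (1 - θ)) hf hg
    have hmul : ∀ x, F x ^ θ * G x ^ (1 - θ) = Real.exp (-(ψ x)) * h x ^ lam := by
      intro x
      rw [hF, hG]
      simp only
      rw [Real.mul_rpow (Real.exp_pos _).le (Real.rpow_nonneg (hh0 x).le _),
        Real.mul_rpow (Real.exp_pos _).le (Real.rpow_nonneg (hh0 x).le _),
        ← Real.rpow_mul (hh0 x).le, ← Real.rpow_mul (hh0 x).le]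
      calc Real.exp (-ψ x) ^ θ * h x ^ (α * θ) * (Real.exp (-ψ x) ^ (1 - θ) * h x ^ (β * (1 - θ)))
          = (Real.exp (-ψ x) ^ θ * Real.exp (-ψ x) ^ (1 - θ)) *
            (h x ^ (α * θ) * h x ^ (β * (1 - θ))) := by ring
        _ = Real.exp (-ψ x) * h x ^ lam := by
            rw [← Real.rpow_add (Real.exp_pos _), ← Real.rpow_add (hh0 x)]
            congr 1
            · rw [show θ + (1 - θ) = (1 : ℝ) by ring, Real.rpow_one]
            · congr 1; linarith [hsum]
    have hFp : ∀ x, (F x ^ θ) ^ p = F x := by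
      intro x
      rw [← Real.rpow_mul (hF0 x), hp, mul_one_div_cancel hθ0.ne', Real.rpow_one]
    have hGq : ∀ x, (G x ^ (1 - θ)) ^ q = G x := by
      intro x
      rw [← Real.rpow_mul (hG0 x), hq, mul_one_div_cancel h1θ.ne', Real.rpow_one]
    simp only [hmul, hFp, hGq] at key
    rw [hp, hq] at key
    simpa [one_div, inv_inv] using key
end

section
/- Let φ : ℝⁿ → [0,∞) be log-concave with suitable smoothness and integrability, h = e^{⟨∇φ,x⟩/φ} φ^{−2} det(Hess(−ln φ)) > 0, and suppose ∫ φ |ln h| dx < ∞. Then the limit Ω_φ = lim_{λ↓0} ( (∫ φ h^λ dx)/(∫ φ dx) )^{1/λ} exists and equals exp( (∫ φ ln h dx) / (∫ φ dx) ). -/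
open Real MeasureTheory Filter Topology Set

lemma aux_rpow_bound {t l : ℝ} (ht : 0 < t) (hl0 : 0 < l) (hl1 : l ≤ 1) :
    |(t ^ l - 1) / l| ≤ |Real.log t| + t := by
  have hrw : t ^ l = Real.exp (Real.log t * l) := Real.rpow_def_of_pos ht l
  have hlo : Real.log t * l + 1 ≤ t ^ l := by
    rw [hrw]; exact Real.add_one_le_exp _
  have hhi : t ^ l ≤ 1 - l + l * t := by
    have hc := convexOn_exp.2 (Set.mem_univ (0:ℝ)) (Set.mem_univ (Real.log t))
      (by linarith : (0:ℝ) ≤ 1 - l) hl0.le (by ring)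
    simp only [smul_eq_mul, mul_zero, zero_add, Real.exp_zero, Real.exp_log ht] at hc
    rw [hrw, mul_comm]; linarith
  have habs : -|Real.log t| ≤ Real.log t := neg_abs_le _
  rw [abs_le]
  constructor
  · rw [le_div_iff₀ hl0]
    nlinarith [mul_le_mul_of_nonneg_left habs hl0.le, mul_pos hl0 ht]
  · rw [div_le_iff₀ hl0]
    nlinarith [mul_nonneg hl0.le (abs_nonneg (Real.log t))]

lemma aux_rpow_tendsto {t : ℝ} (ht : 0 < t) :
    Tendsto (fun l : ℝ => (t ^ l - 1) / l) (𝓝[>] 0) (𝓝 (Real.log t)) := by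
  have hd : HasDerivAt (fun l : ℝ => t ^ l) (Real.log t) 0 := by
    simpa using (Real.hasStrictDerivAt_const_rpow ht 0).hasDerivAt
  have hs := hasDerivAt_iff_tendsto_slope.1 hd
  have hmono : 𝓝[>] (0:ℝ) ≤ 𝓝[≠] 0 :=
    nhdsWithin_mono _ (fun x hx => ne_of_gt hx)
  refine (hs.mono_left hmono).congr fun l => ?_
  simp [slope_def_field, Real.rpow_zero]

/-- For a log-concave `φ = e^{−ψ}` with
`h = e^{⟨∇φ,x⟩/φ} φ^{−2} det Hess(−ln φ) > 0` and `∫ φ |ln h| < ∞`, the limit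
`Ω_φ = lim_{λ↓0} ( (∫ φ h^λ)/(∫φ) )^{1/λ}` exists and equals
`exp( (∫ φ ln h)/(∫ φ) )`. -/
theorem omega_limit {n : ℕ}
    (ψ : EuclideanSpace ℝ (Fin n) → ℝ)
    (hψ : ContDiff ℝ 2 ψ)
    (h : EuclideanSpace ℝ (Fin n) → ℝ)
    (hh : h = fun x => Real.exp (2 * ψ x - (inner ℝ (gradient ψ x) x : ℝ)) * detHess ψ x)
    (hhpos : ∀ x, 0 < h x)
    (hintφ : Integrable (fun x => Real.exp (-(ψ x))))
    (hintlog : Integrable (fun x => Real.exp (-(ψ x)) * |Real.log (h x)|))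
    (hintpow : ∀ l : ℝ, Integrable (fun x => Real.exp (-(ψ x)) * h x ^ l)) :
    Tendsto (fun l : ℝ =>
        ((∫ x, Real.exp (-(ψ x)) * h x ^ l) / (∫ x, Real.exp (-(ψ x)))) ^ (1 / l))
      (nhdsWithin 0 (Set.Ioi (0 : ℝ)))
      (nhds (Real.exp ((∫ x, Real.exp (-(ψ x)) * Real.log (h x))
        / (∫ x, Real.exp (-(ψ x)))))) := by
  have hpos : ∀ (f : EuclideanSpace ℝ (Fin n) → ℝ), (∀ x, 0 < f x) →
      Integrable f → 0 < ∫ x, f x := by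
    intro f hf hint
    rw [integral_pos_iff_support_of_nonneg_ae (ae_of_all _ fun x => (hf x).le) hint]
    have hsupp : Function.support f = Set.univ :=
      Set.eq_univ_iff_forall.2 fun x => (hf x).ne'
    rw [hsupp]
    exact isOpen_univ.measure_pos volume ⟨0, trivial⟩
  set φ : EuclideanSpace ℝ (Fin n) → ℝ := fun x => Real.exp (-(ψ x)) with hφdef
  have hφpos : ∀ x, 0 < φ x := fun x => Real.exp_pos _
  have hcpos : 0 < ∫ x, φ x := hpos _ hφpos hintφ
  have hFpos : ∀ l : ℝ, 0 < ∫ x, φ x * h x ^ l := fun l =>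
    hpos _ (fun x => mul_pos (hφpos x) (Real.rpow_pos_of_pos (hhpos x) l)) (hintpow l)
  -- Step 1 : dominated convergence
  have hDCT : Tendsto (fun l : ℝ => ∫ x, φ x * ((h x ^ l - 1) / l)) (𝓝[>] (0:ℝ))
      (𝓝 (∫ x, φ x * Real.log (h x))) := by
    apply tendsto_integral_filter_of_dominated_convergence
      (bound := fun x => φ x * |Real.log (h x)| + φ x * h x)
    · filter_upwards [self_mem_nhdsWithin] with l (hl : (0:ℝ) < l)
      have heq : (fun x => φ x * ((h x ^ l - 1) / l))
          = fun x => (φ x * h x ^ l - φ x) * (1 / l) := by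
        funext x; field_simp
      rw [heq]
      exact (((hintpow l).sub hintφ).mul_const _).aestronglyMeasurable
    · filter_upwards [Ioc_mem_nhdsGT_of_mem (by norm_num : (0:ℝ) ∈ Set.Ico 0 1)]
        with l hl
      refine ae_of_all _ fun x => ?_
      rw [Real.norm_eq_abs, abs_mul, abs_of_pos (hφpos x), ← mul_add]
      exact mul_le_mul_of_nonneg_left (aux_rpow_bound (hhpos x) hl.1 hl.2) (hφpos x).le
    · refine hintlog.add ?_
      have : (fun x => φ x * h x) = fun x => φ x * h x ^ (1:ℝ) := by
        funext x; rw [Real.rpow_one]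
      rw [this]; exact hintpow 1
    · refine ae_of_all _ fun x => ?_
      exact (aux_rpow_tendsto (hhpos x)).const_mul (φ x)
  -- Step 2 : slope of F
  have hslope : Tendsto (fun l : ℝ => ((∫ x, φ x * h x ^ l) - ∫ x, φ x) / l)
      (𝓝[>] (0:ℝ)) (𝓝 (∫ x, φ x * Real.log (h x))) := by
    refine hDCT.congr' ?_
    filter_upwards [self_mem_nhdsWithin] with l (hl : (0:ℝ) < l)
    rw [← integral_sub (hintpow l) hintφ, ← integral_div]
    congr 1; funext x
    simp only [hφdef]
    field_simp
  -- Step 3 : derivative of F within Ioi 0 at 0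
  have hF0 : (∫ x, φ x * h x ^ (0:ℝ)) = ∫ x, φ x := by
    simp [Real.rpow_zero]
  have hF' : HasDerivWithinAt (fun l : ℝ => ∫ x, φ x * h x ^ l)
      (∫ x, φ x * Real.log (h x)) (Set.Ioi 0) 0 := by
    rw [hasDerivWithinAt_iff_tendsto_slope' (by simp : (0:ℝ) ∉ Set.Ioi (0:ℝ))]
    refine hslope.congr fun l => ?_
    simp [slope_def_field, hF0]
  -- Step 4 : derivative of log ∘ F
  have hlog : HasDerivWithinAt (fun l : ℝ => Real.log (∫ x, φ x * h x ^ l))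
      ((∫ x, φ x * Real.log (h x)) / (∫ x, φ x)) (Set.Ioi 0) 0 := by
    have hd := (Real.hasDerivAt_log (by rw [hF0]; exact hcpos.ne')).comp_hasDerivWithinAt 0 hF'
    have : (∫ x, φ x * h x ^ (0:ℝ))⁻¹ * ∫ x, φ x * Real.log (h x)
        = (∫ x, φ x * Real.log (h x)) / (∫ x, φ x) := by
      rw [hF0, div_eq_inv_mul]
    rw [← this]
    exact hd
  have hlogslope : Tendsto
      (fun l : ℝ => (Real.log (∫ x, φ x * h x ^ l) - Real.log (∫ x, φ x)) / l)
      (𝓝[>] (0:ℝ)) (𝓝 ((∫ x, φ x * Real.log (h x)) / (∫ x, φ x))) := by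
    rw [hasDerivWithinAt_iff_tendsto_slope' (by simp : (0:ℝ) ∉ Set.Ioi (0:ℝ))] at hlog
    refine hlog.congr fun l => ?_
    simp [slope_def_field, hF0]
  -- Step 5 : conclude
  have hfinal := (Real.continuous_exp.continuousAt
    (x := (∫ x, φ x * Real.log (h x)) / (∫ x, φ x))).tendsto.comp hlogslope
  refine hfinal.congr' ?_
  filter_upwards [self_mem_nhdsWithin] with l (hl : (0:ℝ) < l)
  have hdivpos : 0 < (∫ x, φ x * h x ^ l) / ∫ x, φ x := div_pos (hFpos l) hcpos
  rw [Function.comp_apply, Real.rpow_def_of_pos hdivpos,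
    Real.log_div (hFpos l).ne' hcpos.ne']
  ring_nf
end
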